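/- There is no perfect 2-colouring of the 5-cube Q_5 with colour adjacency matrix [[0,5],[1,4]], and there is no perfect 2-colouring of Q_5 with colour adjacency matrix [[1,4],[2,3]]. -/

import Mathlib

/-- The `d`-cube graph: vertices are `{0,1}^d` (as `Fin d → Bool`), two vertices
are adjacent iff they differ in exactly one coordinate. -/
def cubeGraph (d : ℕ) : SimpleGraph (Fin d → Bool) where
  Adj x y := ∃! i, x i ≠ y i
  symm := by
    constructor
    rintro x y ⟨i, hi, hu⟩
    exact ⟨i, hi.symm, fun j hj => hu j hj.symm⟩
  loopless := by
    constructor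
    rintro x ⟨i, hi, -⟩
    exact hi rfl

/-- `c` is a perfect `m`-colouring of a finite simple graph `G` with colour
adjacency matrix `A`: `c` is surjective and every vertex of colour `i` has
exactly `A i j` neighbours of colour `j`. -/
def IsPerfectColoring {V : Type*} [Fintype V] {m : ℕ} (G : SimpleGraph V)
    (c : V → Fin m) (A : Matrix (Fin m) (Fin m) ℕ) : Prop :=
  Function.Surjective c ∧
    ∀ v : V, ∀ j : Fin m, {w : V | G.Adj v w ∧ c w = j}.ncard = A (c v) j

open Finset

lemma dcount {V : Type*} [Fintype V] [DecidableEq V] (G : SimpleGraph V)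
    (c : V → Fin 2) (A : Matrix (Fin 2) (Fin 2) ℕ)
    (h : ∀ v : V, ∀ j : Fin 2, {w : V | G.Adj v w ∧ c w = j}.ncard = A (c v) j) :
    A 0 1 * (univ.filter fun v => c v = 0).card
      = A 1 0 * (univ.filter fun v => c v = 1).card := by
  classical
  have key : ∀ v j, (univ.filter fun w => G.Adj v w ∧ c w = j).card = A (c v) j := by
    intro v j
    rw [← h v j, ← Set.ncard_coe_finset]
    congr 1; ext w; simp
  set T := univ.filter (fun p : V × V => G.Adj p.1 p.2 ∧ c p.1 = 0 ∧ c p.2 = 1) with hT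
  have h1 : T.card = A 0 1 * (univ.filter fun v => c v = 0).card := by
    rw [Finset.card_eq_sum_card_fiberwise (f := Prod.fst) (t := univ) (fun _ _ => mem_univ _)]
    have fib : ∀ v, T.filter (fun p => p.1 = v)
        = (univ.filter fun w => G.Adj v w ∧ c v = 0 ∧ c w = 1).image (fun w => (v, w)) := by
      intro v; ext p
      simp only [hT, mem_filter, mem_univ, true_and, mem_image]
      constructor
      · rintro ⟨⟨ha, h0, h1⟩, rfl⟩; exact ⟨p.2, ⟨ha, h0, h1⟩, rfl⟩
      · rintro ⟨w, ⟨ha, h0, h1⟩, rfl⟩; exact ⟨⟨ha, h0, h1⟩, rfl⟩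
    calc (∑ v, (T.filter (fun p => p.1 = v)).card)
        = ∑ v : V, (if c v = 0 then A 0 1 else 0) := by
          refine Finset.sum_congr rfl fun v _ => ?_
          rw [fib, Finset.card_image_of_injective _ (fun a b hab => (Prod.mk.injEq _ _ _ _).mp hab |>.2)]
          by_cases h0 : c v = 0
          · simp only [h0]
            have := key v 1
            rw [h0] at this
            simpa using this
          · simp only [h0]
            simp
      _ = A 0 1 * (univ.filter fun v => c v = 0).card := by
          rw [Finset.sum_ite, Finset.sum_const, Finset.sum_const_zero, add_zero,
            smul_eq_mul, mul_comm]
  have h2 : T.card = A 1 0 * (univ.filter fun v => c v = 1).card := by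
    rw [Finset.card_eq_sum_card_fiberwise (f := Prod.snd) (t := univ) (fun _ _ => mem_univ _)]
    have fib : ∀ w, T.filter (fun p => p.2 = w)
        = (univ.filter fun v => G.Adj w v ∧ c w = 1 ∧ c v = 0).image (fun v => (v, w)) := by
      intro w; ext p
      simp only [hT, mem_filter, mem_univ, true_and, mem_image]
      constructor
      · rintro ⟨⟨ha, h0, h1⟩, rfl⟩; exact ⟨p.1, ⟨ha.symm, h1, h0⟩, rfl⟩
      · rintro ⟨v, ⟨ha, h1, h0⟩, rfl⟩; exact ⟨⟨ha.symm, h0, h1⟩, rfl⟩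
    calc (∑ w, (T.filter (fun p => p.2 = w)).card)
        = ∑ w : V, (if c w = 1 then A 1 0 else 0) := by
          refine Finset.sum_congr rfl fun w _ => ?_
          rw [fib, Finset.card_image_of_injective _ (fun a b hab => (Prod.mk.injEq _ _ _ _).mp hab |>.1)]
          by_cases h1 : c w = 1
          · simp only [h1]
            have := key w 0
            rw [h1] at this
            simpa using this
          · simp only [h1]
            simp
      _ = A 1 0 * (univ.filter fun v => c v = 1).card := by
          rw [Finset.sum_ite, Finset.sum_const, Finset.sum_const_zero, add_zero,
            smul_eq_mul, mul_comm]
  rw [← h1, ← h2]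

lemma split_card {V : Type*} [Fintype V] [DecidableEq V] (c : V → Fin 2) :
    (univ.filter fun v => c v = 0).card + (univ.filter fun v => c v = 1).card
      = Fintype.card V := by
  classical
  have he : (univ.filter fun v => c v = 1) = (univ.filter fun v => ¬ c v = 0) := by
    ext v
    simp only [mem_filter, mem_univ, true_and, Fin.ext_iff]
    have := (c v).isLt
    omega
  rw [he, Finset.card_filter_add_card_filter_not, Finset.card_univ]

/-- There is no perfect 2-colouring of the 5-cube with colour adjacency matrix
[[0,5],[1,4]], and none with colour adjacency matrix [[1,4],[2,3]]. -/
theorem no_perfect_coloring_fiveCube_0514_and_1423 :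
    (¬ ∃ c : (Fin 5 → Bool) → Fin 2,
      IsPerfectColoring (cubeGraph 5) c !![0,5;1,4]) ∧
    (¬ ∃ c : (Fin 5 → Bool) → Fin 2,
      IsPerfectColoring (cubeGraph 5) c !![1,4;2,3]) := by
  classical
  have hcard : Fintype.card (Fin 5 → Bool) = 32 := by
    simp [Fintype.card_fun]
  constructor
  · rintro ⟨c, -, h⟩
    have hd := dcount (cubeGraph 5) c _ h
    have hs := split_card c
    rw [hcard] at hs
    have e1 : !![0,5;1,4] 0 1 = 5 := rfl
    have e2 : !![0,5;1,4] 1 0 = 1 := rfl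
    rw [e1, e2] at hd
    omega
  · rintro ⟨c, -, h⟩
    have hd := dcount (cubeGraph 5) c _ h
    have hs := split_card c
    rw [hcard] at hs
    have e1 : !![1,4;2,3] 0 1 = 4 := rfl
    have e2 : !![1,4;2,3] 1 0 = 2 := rfl
    rw [e1, e2] at hd
    omega
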